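/- Let v(z) = (exp(-2i(z+C)) - 1)/(exp(-2i(z+C)) + 1) with Im(C) > 0 and V(t,x) = v(x+it), U(t,x) = i V(t,x). Then at every point (t,x) with t > 0 and V(t,x) ≠ 0, the momentum equation holds: ∂U/∂t + ∂(1/V)/∂x = ∂/∂x ( (∂U/∂x)/V ). -/

import Mathlib

open Complex

noncomputable def v (C : ℂ) (z : ℂ) : ℂ :=
  (Complex.exp (-2 * I * (z + C)) - 1) / (Complex.exp (-2 * I * (z + C)) + 1)

noncomputable def Efun (C z : ℂ) : ℂ := Complex.exp (-2 * I * (z + C))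
noncomputable def dv (C z : ℂ) : ℂ := -4 * I * Efun C z / (Efun C z + 1) ^ 2
noncomputable def ddv (C z : ℂ) : ℂ := -8 * Efun C z * (1 - Efun C z) / (Efun C z + 1) ^ 3

lemma hasDerivAt_Efun (C z : ℂ) : HasDerivAt (Efun C) (-2 * I * Efun C z) z := by
  have h1 : HasDerivAt (fun w : ℂ => -2 * I * (w + C)) (-2 * I) z := by
    simpa using ((hasDerivAt_id z).add_const C).const_mul (-2 * I)
  have h2 := h1.cexp
  have hfun : Efun C = fun w => Complex.exp (-2 * I * (w + C)) := rfl
  rw [hfun]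
  convert h2 using 1
  show -2 * I * Efun C z = _
  simp only [Efun]
  ring
  all_goals rfl

lemma hasDerivAt_v (C z : ℂ) (h : Efun C z + 1 ≠ 0) :
    HasDerivAt (v C) (dv C z) z := by
  have hE := hasDerivAt_Efun C z
  have h1 := (hE.sub_const 1).div (hE.add_const 1) h
  have hfun : v C = fun w => (Efun C w - 1) / (Efun C w + 1) := rfl
  rw [hfun]
  convert h1 using 1
  show dv C z = _
  simp only [dv]
  field_simp
  ring
  all_goals rfl

lemma hasDerivAt_dv (C z : ℂ) (h : Efun C z + 1 ≠ 0) :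
    HasDerivAt (dv C) (ddv C z) z := by
  have hE := hasDerivAt_Efun C z
  have hnum : HasDerivAt (fun w => -4 * I * Efun C w) (-4 * I * (-2 * I * Efun C z)) z :=
    hE.const_mul _
  have hden : HasDerivAt (fun w => (Efun C w + 1) ^ 2)
      (2 * (Efun C z + 1) ^ 1 * (-2 * I * Efun C z)) z := (hE.add_const 1).pow 2
  have h2 : (Efun C z + 1) ^ 2 ≠ 0 := pow_ne_zero _ h
  have h1 := hnum.div hden h2
  have hfun : dv C = fun w => -4 * I * Efun C w / (Efun C w + 1) ^ 2 := rfl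
  rw [hfun]
  convert h1 using 1
  show ddv C z = _
  simp only [ddv]
  have hI : (I:ℂ)^2 = -1 := Complex.I_sq
  field_simp
  ring_nf
  linear_combination (-8*Efun C z + 8*Efun C z^2) * hI
  all_goals rfl

lemma key_alg (E : ℂ) (h1 : E + 1 ≠ 0) (h2 : E - 1 ≠ 0) :
    -(-4*I*E/(E+1)^2) + (-(-4*I*E/(E+1)^2)/((E-1)/(E+1))^2)
    = (I*(-8*E*(1-E)/(E+1)^3)*((E-1)/(E+1)) - I*(-4*I*E/(E+1)^2)*(-4*I*E/(E+1)^2))/((E-1)/(E+1))^2 := by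
  have hI : (I:ℂ)^2 = -1 := Complex.I_sq
  have h3 : ((E:ℂ)+1)^2 ≠ 0 := pow_ne_zero _ h1
  have h4 : ((E:ℂ)+1)^3 ≠ 0 := pow_ne_zero _ h1
  have h5 : ((E:ℂ)-1)^2 ≠ 0 := pow_ne_zero _ h2
  field_simp
  linear_combination (16*E^2) * hI

theorem momentum_equation (C : ℂ) (hC : C.im > 0)
    (V : ℝ → ℝ → ℂ) (U : ℝ → ℝ → ℂ)
    (hV : ∀ t x : ℝ, V t x = v C (x + I * t))
    (hU : ∀ t x : ℝ, U t x = I * V t x) :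
    ∀ t x : ℝ, 0 < t → V t x ≠ 0 →
      deriv (fun s : ℝ => U s x) t + deriv (fun y : ℝ => 1 / V t y) x
        = deriv (fun y : ℝ => deriv (fun y' : ℝ => U t y') y / V t y) x := by
  intro t x ht hVne
  -- the exponential never equals -1 on the line Im = t > 0
  have hne : ∀ y : ℝ, Efun C ((y:ℂ) + I * t) + 1 ≠ 0 := by
    intro y h
    have h2 : Complex.exp (-2 * I * (((y:ℂ) + I * t) + C)) = -1 := by
      have := eq_neg_of_add_eq_zero_left h
      simpa [Efun] using this
    have h3 := congrArg (fun w : ℂ => ‖w‖) h2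
    rw [Complex.norm_exp] at h3
    simp at h3
    linarith
  set z : ℂ := (x : ℂ) + I * t with hz
  have hv0 : v C z ≠ 0 := by rw [hV] at hVne; exact hVne
  -- spatial derivative of v-along-line
  have hVx : ∀ y : ℝ, HasDerivAt (fun y' : ℝ => v C ((y':ℂ) + I * t)) (dv C ((y:ℂ) + I * t)) y := by
    intro y
    have hin : HasDerivAt (fun w : ℂ => w + I * t) 1 (y:ℂ) := (hasDerivAt_id _).add_const _
    have h1 : HasDerivAt (fun w : ℂ => v C (w + I * t)) (dv C ((y:ℂ) + I * t)) (y:ℂ) := by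
      have := (hasDerivAt_v C ((y:ℂ) + I * t) (hne y)).comp (y:ℂ) hin
      rw [mul_one] at this; exact this
    exact h1.comp_ofReal
  -- spatial derivative of dv-along-line
  have hdvx : HasDerivAt (fun y : ℝ => dv C ((y:ℂ) + I * t)) (ddv C z) x := by
    have hin : HasDerivAt (fun w : ℂ => w + I * t) 1 (x:ℂ) := (hasDerivAt_id _).add_const _
    have h1 : HasDerivAt (fun w : ℂ => dv C (w + I * t)) (ddv C z) (x:ℂ) := by
      have := (hasDerivAt_dv C z (hne x)).comp (x:ℂ) hin
      rw [mul_one] at this; exact this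
    exact h1.comp_ofReal
  -- time derivative of v-along-line
  have hVt : HasDerivAt (fun s : ℝ => v C ((x:ℂ) + I * s)) (dv C z * I) t := by
    have hin : HasDerivAt (fun w : ℂ => (x:ℂ) + I * w) I (t:ℂ) := by
      simpa using ((hasDerivAt_id (t:ℂ)).const_mul I).const_add (x:ℂ)
    have h1 : HasDerivAt (fun w : ℂ => v C ((x:ℂ) + I * w)) (dv C z * I) (t:ℂ) :=
      by have := (hasDerivAt_v C z (hne x)).comp (t:ℂ) hin; exact this
    exact h1.comp_ofReal
  -- compute the three derivs
  have e1 : (fun s : ℝ => U s x) = fun s : ℝ => I * v C ((x:ℂ) + I * s) := by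
    funext s; rw [hU, hV]
  have d1 : deriv (fun s : ℝ => U s x) t = I * (dv C z * I) := by
    rw [e1]; exact (hVt.const_mul I).deriv
  have e2 : (fun y : ℝ => 1 / V t y) = fun y : ℝ => 1 / v C ((y:ℂ) + I * t) := by
    funext y; rw [hV]
  have hv0' : v C ((x:ℂ) + I * t) ≠ 0 := by rw [← hz]; exact hv0
  have d2 : deriv (fun y : ℝ => 1 / V t y) x = -dv C z / (v C z) ^ 2 := by
    have hd : HasDerivAt (fun y : ℝ => 1 / v C ((y:ℂ) + I * t))
        ((0 * v C ((x:ℂ) + I * t) - 1 * dv C ((x:ℂ) + I * t)) / (v C ((x:ℂ) + I * t)) ^ 2) x :=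
      HasDerivAt.div (c := fun _ : ℝ => (1:ℂ)) (d := fun y : ℝ => v C ((y:ℂ) + I * t))
        (hasDerivAt_const x (1:ℂ)) (hVx x) hv0'
    rw [e2, hz, hd.deriv]; ring
  have e3 : (fun y : ℝ => deriv (fun y' : ℝ => U t y') y / V t y)
      = fun y : ℝ => (I * dv C ((y:ℂ) + I * t)) / v C ((y:ℂ) + I * t) := by
    funext y
    rw [hV]
    congr 1
    have hUfun : (fun y' : ℝ => U t y') = fun y' : ℝ => I * v C ((y':ℂ) + I * t) := by
      funext y'; rw [hU, hV]
    rw [hUfun]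
    exact ((hVx y).const_mul I).deriv
  have d3 : deriv (fun y : ℝ => deriv (fun y' : ℝ => U t y') y / V t y) x
      = (I * ddv C z * v C z - I * dv C z * dv C z) / (v C z) ^ 2 := by
    have hdvx' : HasDerivAt (fun y : ℝ => dv C ((y:ℂ) + I * t)) (ddv C ((x:ℂ) + I * t)) x := by
      rw [← hz]; exact hdvx
    have hd : HasDerivAt (fun y : ℝ => (I * dv C ((y:ℂ) + I * t)) / v C ((y:ℂ) + I * t))
        ((I * ddv C ((x:ℂ) + I * t) * v C ((x:ℂ) + I * t)
          - I * dv C ((x:ℂ) + I * t) * dv C ((x:ℂ) + I * t)) / (v C ((x:ℂ) + I * t)) ^ 2) x :=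
      HasDerivAt.div (c := fun y : ℝ => I * dv C ((y:ℂ) + I * t)) (d := fun y : ℝ => v C ((y:ℂ) + I * t)) (hdvx'.const_mul I) (hVx x) hv0'
    rw [e3, hz]; exact hd.deriv
  rw [d1, d2, d3]
  -- convert to the algebraic identity in E := Efun C z
  have hE1 : Efun C z + 1 ≠ 0 := hne x
  have hE2 : Efun C z - 1 ≠ 0 := by
    intro h
    apply hv0
    have hvz : v C z = (Efun C z - 1) / (Efun C z + 1) := rfl
    rw [hvz, h, zero_div]
  have hvz : v C z = (Efun C z - 1) / (Efun C z + 1) := rfl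
  have := key_alg (Efun C z) hE1 hE2
  simp only [dv, ddv, hvz]
  calc I * (-4 * I * Efun C z / (Efun C z + 1) ^ 2 * I)
        + -(-4 * I * Efun C z / (Efun C z + 1) ^ 2) / ((Efun C z - 1) / (Efun C z + 1)) ^ 2
      = -(-4*I*Efun C z/(Efun C z+1)^2)
        + (-(-4*I*Efun C z/(Efun C z+1)^2)/((Efun C z-1)/(Efun C z+1))^2) := by
        congr 1
        rw [mul_comm (-4 * I * Efun C z / (Efun C z + 1) ^ 2) I, ← mul_assoc, Complex.I_mul_I]
        ring
    _ = _ := by rw [this]
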